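/- For every x ∈ [1/N, 1], the density-evolution variable message satisfies λ̄^N(x) = exp(−(μ + G_N(p) + 1)·ρ^N(1−x)) ≤ e^{−μ}·q_p(x) < q_p(x). -/

import Mathlib

open Real Filter

noncomputable def qp (p x : ℝ) : ℝ :=
  (Real.sqrt ((1 - p) ^ 2 + 4 * p * x) - (1 - p)) / (2 * p)

noncomputable def aCoeff (p : ℝ) (i : ℕ) : ℝ :=
  (∑ k ∈ Finset.range i, (Nat.choose (2 * i - 1) k : ℝ) * p ^ k) /
    (i * (1 + p) ^ (2 * i - 1))

noncomputable def Gpart (p : ℝ) (N : ℕ) : ℝ := ∑ i ∈ Finset.Icc 1 N, aCoeff p i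

noncomputable def Sp (p x : ℝ) : ℝ := - Real.log (qp p (1 - x))

noncomputable def rhoN (p μ : ℝ) (N : ℕ) (x : ℝ) : ℝ :=
  (μ + (∑ i ∈ Finset.Icc 1 N, aCoeff p i * x ^ i) + x ^ N) / (μ + Gpart p N + 1)

noncomputable def lamBarN (p μ : ℝ) (N : ℕ) (x : ℝ) : ℝ :=
  Real.exp (-(μ + Gpart p N + 1) * rhoN p μ N (1 - x))

noncomputable def deSym (p μ : ℝ) (N : ℕ) (x : ℝ) : ℝ :=
  ((1 - p) + p * lamBarN p μ N x) * lamBarN p μ N x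

noncomputable def cornerMap (p μ : ℝ) (N : ℕ) (α ε₁ ε₂ : ℝ) (y : ℝ) : ℝ :=
  ((1 - p) + p * Real.exp (-(α * (1 - ε₁)))) *
    Real.exp (-(α * (1 - ε₂)) * rhoN p μ N (1 - y))

/-! ### Auxiliary combinatorics -/

section Combinatorics
open Finset

lemma conv_sym (n : ℕ) :
    2 * ∑ k ∈ range (n+1), k * (Nat.centralBinom k * Nat.centralBinom (n-k)) =
      n * ∑ k ∈ range (n+1), Nat.centralBinom k * Nat.centralBinom (n-k) := by
  have h := Finset.sum_range_reflect
    (fun k => k * (Nat.centralBinom k * Nat.centralBinom (n-k))) (n+1)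
  rw [two_mul, Finset.mul_sum]
  nth_rewrite 1 [← h]
  rw [← Finset.sum_add_distrib]
  apply Finset.sum_congr rfl
  intro k hk
  rw [Finset.mem_range] at hk
  have hk' : k ≤ n := Nat.lt_succ_iff.mp hk
  have h1 : n + 1 - 1 - k = n - k := by omega
  have h2 : n - (n - k) = k := by omega
  rw [h1, h2]
  have h3 : (n - k) + k = n := by omega
  calc (n-k) * (Nat.centralBinom (n-k) * Nat.centralBinom k)
        + k * (Nat.centralBinom k * Nat.centralBinom (n-k))
      = ((n-k) + k) * (Nat.centralBinom k * Nat.centralBinom (n-k)) := by ring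
    _ = n * (Nat.centralBinom k * Nat.centralBinom (n-k)) := by rw [h3]

lemma conv_central (n : ℕ) :
    ∑ k ∈ range (n+1), Nat.centralBinom k * Nat.centralBinom (n-k) = 4 ^ n := by
  induction n with
  | zero => simp [Nat.centralBinom]
  | succ n ih =>
    have key : ∑ k ∈ range (n+2), k * (Nat.centralBinom k * Nat.centralBinom (n+1-k)) =
        2 * (n+1) * ∑ k ∈ range (n+1), Nat.centralBinom k * Nat.centralBinom (n-k) := by
      rw [Finset.sum_range_succ' (fun k => k * (Nat.centralBinom k * Nat.centralBinom (n+1-k))) (n+1)]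
      simp only [Nat.zero_eq, zero_mul, add_zero]
      have : ∀ j ∈ range (n+1), (j+1) * (Nat.centralBinom (j+1) * Nat.centralBinom (n+1-(j+1))) =
          2 * ((2*j+1) * (Nat.centralBinom j * Nat.centralBinom (n-j))) := by
        intro j hj
        have h1 : n + 1 - (j+1) = n - j := by omega
        rw [h1, ← mul_assoc, Nat.succ_mul_centralBinom_succ]
        ring
      rw [Finset.sum_congr rfl this, ← Finset.mul_sum]
      have expand : ∑ j ∈ range (n+1), (2*j+1) * (Nat.centralBinom j * Nat.centralBinom (n-j)) =
          2 * ∑ j ∈ range (n+1), j * (Nat.centralBinom j * Nat.centralBinom (n-j))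
          + ∑ j ∈ range (n+1), Nat.centralBinom j * Nat.centralBinom (n-j) := by
        rw [Finset.mul_sum, ← Finset.sum_add_distrib]
        apply Finset.sum_congr rfl; intro k _; ring
      rw [expand, conv_sym]
      ring
    have key2 : 2 * ∑ k ∈ range (n+2), k * (Nat.centralBinom k * Nat.centralBinom (n+1-k)) =
        (n+1) * ∑ k ∈ range (n+2), Nat.centralBinom k * Nat.centralBinom (n+1-k) := conv_sym (n+1)
    rw [key, ih] at key2
    have : (n+1) * ∑ k ∈ range (n+2), Nat.centralBinom k * Nat.centralBinom (n+1-k)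
        = (n+1) * 4^(n+1) := by
      rw [← key2]; ring
    exact Nat.eq_of_mul_eq_mul_left (by omega : 0 < n+1) this

lemma centralBinom_le_four_pow (n : ℕ) : Nat.centralBinom n ≤ 4 ^ n := by
  have h : Nat.centralBinom n ≤ ∑ k ∈ range (2*n+1), (2*n).choose k :=
    Finset.single_le_sum (f := fun k => (2*n).choose k) (fun i _ => Nat.zero_le _)
      (Finset.mem_range.mpr (by omega))
  have h2 : ∑ k ∈ range (2*n+1), (2*n).choose k = 2 ^ (2*n) := Nat.sum_range_choose (2*n)
  calc Nat.centralBinom n ≤ 2 ^ (2*n) := h.trans h2.le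
    _ = 4 ^ n := by rw [pow_mul]; norm_num

noncomputable def gam (n : ℕ) : ℝ := (Nat.centralBinom n : ℝ) / 4 ^ n

lemma gam_nonneg (n : ℕ) : 0 ≤ gam n := by unfold gam; positivity

lemma gam_le_one (n : ℕ) : gam n ≤ 1 := by
  unfold gam
  rw [div_le_one (by positivity)]
  exact_mod_cast centralBinom_le_four_pow n

lemma gam_conv (n : ℕ) : ∑ k ∈ range (n+1), gam k * gam (n-k) = 1 := by
  have cast : ((∑ k ∈ range (n+1), Nat.centralBinom k * Nat.centralBinom (n-k) : ℕ) : ℝ)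
      = ((4:ℝ))^n := by rw [conv_central n]; push_cast; ring
  push_cast at cast
  unfold gam
  have : ∀ k ∈ range (n+1), (Nat.centralBinom k : ℝ)/4^k * ((Nat.centralBinom (n-k) : ℝ)/4^(n-k))
      = ((Nat.centralBinom k : ℝ) * (Nat.centralBinom (n-k) : ℝ)) / 4^n := by
    intro k hk
    rw [Finset.mem_range] at hk
    rw [div_mul_div_comm, ← pow_add]
    congr 2
    omega
  rw [Finset.sum_congr rfl this, ← Finset.sum_div, cast]
  rw [div_eq_one_iff_eq (by positivity)]

lemma summable_gam_pow {u : ℝ} (h0 : 0 ≤ u) (h1 : u < 1) :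
    Summable (fun n => gam n * u ^ n) := by
  apply Summable.of_nonneg_of_le (fun n => mul_nonneg (gam_nonneg n) (pow_nonneg h0 n))
    (fun n => ?_) (summable_geometric_of_lt_one h0 h1)
  calc gam n * u ^ n ≤ 1 * u ^ n :=
        mul_le_mul_of_nonneg_right (gam_le_one n) (pow_nonneg h0 n)
    _ = u ^ n := one_mul _

lemma hasSum_gam {u : ℝ} (h0 : 0 ≤ u) (h1 : u < 1) :
    HasSum (fun n => gam n * u ^ n) (1 / Real.sqrt (1 - u)) := by
  have hs := summable_gam_pow h0 h1
  set f : ℝ := ∑' n, gam n * u ^ n with hf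
  have hnorm : Summable (fun n => ‖gam n * u ^ n‖) := by
    have : (fun n => ‖gam n * u ^ n‖) = fun n => gam n * u ^ n := by
      funext n
      rw [Real.norm_eq_abs, abs_of_nonneg (mul_nonneg (gam_nonneg n) (pow_nonneg h0 n))]
    rw [this]; exact hs
  have cauchy : f * f = ∑' n, ∑ k ∈ range (n+1), (gam k * u^k) * (gam (n-k) * u^(n-k)) :=
    tsum_mul_tsum_eq_tsum_sum_range_of_summable_norm hnorm hnorm
  have inner : ∀ n : ℕ, ∑ k ∈ range (n+1), (gam k * u^k) * (gam (n-k) * u^(n-k)) = u ^ n := by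
    intro n
    have : ∀ k ∈ range (n+1), (gam k * u^k) * (gam (n-k) * u^(n-k)) = (gam k * gam (n-k)) * u^n := by
      intro k hk
      rw [Finset.mem_range] at hk
      have : u^k * u^(n-k) = u^n := by rw [← pow_add]; congr 1; omega
      calc (gam k * u^k) * (gam (n-k) * u^(n-k)) = (gam k * gam (n-k)) * (u^k * u^(n-k)) := by ring
        _ = (gam k * gam (n-k)) * u^n := by rw [this]
    rw [Finset.sum_congr rfl this, ← Finset.sum_mul, gam_conv, one_mul]
  have geom : ∑' n : ℕ, u ^ n = (1-u)⁻¹ := tsum_geometric_of_lt_one h0 h1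
  rw [funext inner, geom] at cauchy
  have hu : 0 < 1 - u := by linarith
  have fpos : 0 < f := by
    have h0' : gam 0 * u ^ 0 = 1 := by simp [gam, Nat.centralBinom]
    have hle : gam 0 * u ^ 0 ≤ f :=
      Summable.le_tsum hs 0 (fun i _ => mul_nonneg (gam_nonneg i) (pow_nonneg h0 i))
    linarith [hle, h0'.symm.le]
  have hfeq : f = 1 / Real.sqrt (1 - u) := by
    have h1' : f ^ 2 = (1-u)⁻¹ := by rw [sq, cauchy]
    have h2' : Real.sqrt (f ^ 2) = Real.sqrt ((1-u)⁻¹) := by rw [h1']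
    rw [Real.sqrt_sq fpos.le, Real.sqrt_inv] at h2'
    rw [h2', one_div]
  rw [← hfeq]
  exact hs.hasSum

lemma Psum (n m : ℕ) (x : ℝ) :
    ∑ k ∈ range (m+1), ((n+1).choose k : ℝ) * x^k =
      ∑ k ∈ range (m+1), (n.choose k : ℝ) * x^k + x * ∑ k ∈ range m, (n.choose k : ℝ) * x^k := by
  rw [Finset.sum_range_succ' (fun k => ((n+1).choose k : ℝ) * x^k) m]
  have h1 : ∀ j ∈ range m, ((n+1).choose (j+1) : ℝ) * x^(j+1)
      = (n.choose j : ℝ) * x^(j+1) + (n.choose (j+1) : ℝ) * x^(j+1) := by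
    intro j _
    rw [Nat.choose_succ_succ]
    push_cast
    ring
  rw [Finset.sum_congr rfl h1, Finset.sum_add_distrib]
  rw [Finset.sum_range_succ' (fun k => (n.choose k : ℝ) * x^k) m]
  simp only [Nat.choose_zero_right, Nat.cast_one, pow_zero, mul_one, one_mul]
  rw [Finset.mul_sum]
  have h2 : ∀ j ∈ range m, (n.choose j : ℝ) * x^(j+1) = x * ((n.choose j : ℝ) * x^j) := by
    intro j _; ring
  rw [Finset.sum_congr rfl h2]
  ring

lemma claimA (m : ℕ) (x : ℝ) :
    ∑ k ∈ range (m+2), ((2*(m+1)+1).choose k : ℝ) * x^k =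
      (1 + 2*x + x^2) * (∑ k ∈ range (m+1), ((2*m+1).choose k : ℝ) * x^k)
      + ((2*m+1).choose m : ℝ) * (x^(m+1) - x^(m+2)) := by
  have e1 : 2*(m+1)+1 = (2*m+2)+1 := by ring
  rw [e1, Psum (2*m+2) (m+1) x]
  have e2 : (2*m+2) = (2*m+1)+1 := by ring
  rw [e2, Psum (2*m+1) (m+1) x, Psum (2*m+1) m x]
  rw [Finset.sum_range_succ (fun k => ((2*m+1).choose k : ℝ) * x^k) (m+1)]
  rw [Finset.sum_range_succ (fun k => ((2*m+1).choose k : ℝ) * x^k) m]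
  have e3 : ((2*m+1).choose (m+1) : ℝ) = ((2*m+1).choose m : ℝ) := by
    have h : 2*m+1 - (m+1) = m := by omega
    rw [← Nat.choose_symm (by omega : m+1 ≤ 2*m+1), h]
  rw [e3]
  ring

noncomputable def cc (p : ℝ) : ℝ := 4*p/(1+p)^2
noncomputable def dd (p : ℝ) : ℝ := (1-p)/(1+p)
noncomputable def BB (p : ℝ) (m : ℕ) : ℝ := ∑ n ∈ range (m+1), gam n * (cc p)^n
noncomputable def bb (p : ℝ) (m : ℕ) : ℝ :=
  (∑ k ∈ range (m+1), ((2*m+1).choose k : ℝ) * p^k) / (1+p)^(2*m+1)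

lemma gam_cc {p : ℝ} (hp : 0 < p) (n : ℕ) :
    gam n * (cc p)^n = (Nat.centralBinom n : ℝ) * p^n / (1+p)^(2*n) := by
  have h1 : (0:ℝ) < 1 + p := by linarith
  unfold gam cc
  rw [div_pow, mul_pow, ← pow_mul]
  rw [div_mul_div_comm]
  have h4 : (4:ℝ)^n ≠ 0 := by positivity
  field_simp

lemma centralBinom_succ_real (m : ℕ) :
    (Nat.centralBinom (m+1) : ℝ) = 2 * ((2*m+1).choose m : ℝ) := by
  have h : Nat.centralBinom (m+1) = (2*m+2).choose (m+1) := by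
    unfold Nat.centralBinom
    congr 1
  have h2 : (2*m+2).choose (m+1) = (2*m+1).choose m + (2*m+1).choose (m+1) :=
    Nat.choose_succ_succ' (2*m+1) m
  have h3 : (2*m+1).choose (m+1) = (2*m+1).choose m := by
    have e : 2*m+1 - (m+1) = m := by omega
    rw [← Nat.choose_symm (by omega : m+1 ≤ 2*m+1), e]
  rw [h, h2, h3]
  push_cast
  ring

lemma bb_eq {p : ℝ} (hp : 0 < p) (hp1 : p < 1) (m : ℕ) :
    bb p m = (1 + dd p * BB p m) / 2 := by
  have h1 : (0:ℝ) < 1 + p := by linarith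
  have h1' : (1:ℝ) + p ≠ 0 := ne_of_gt h1
  induction m with
  | zero =>
    unfold bb dd BB cc gam
    simp [Nat.centralBinom]
    field_simp
    norm_num
  | succ m ih =>
    unfold bb
    have e1 : 2*(m+1)+1 = 2*m+3 := by ring
    have epow : (1+p)^(2*(m+1)+1) = (1+p)^(2*m+1) * (1+p)^2 := by
      rw [show 2*(m+1)+1 = (2*m+1)+2 from by omega, pow_add]
    rw [claimA m p, epow]
    have hP : (∑ k ∈ range (m+1), ((2*m+1).choose k : ℝ) * p^k)
        = (1 + dd p * BB p m) / 2 * (1+p)^(2*m+1) := by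
      have := ih
      unfold bb at this
      field_simp at this ⊢
      linarith [this]
    rw [hP]
    unfold BB
    rw [Finset.sum_range_succ (fun n => gam n * (cc p)^n) (m+1)]
    rw [gam_cc hp (m+1), centralBinom_succ_real m]
    have epow2 : (1+p)^(2*(m+1)) = (1+p)^(2*m+1) * (1+p) := by
      rw [← pow_succ]; congr 1
    rw [epow2]
    unfold dd
    have hpow_ne : (1+p)^(2*m+1) ≠ 0 := pow_ne_zero _ h1'
    field_simp
    ring

end Combinatorics

/-! ### Analytic part -/

section Analytic
open Finset

variable {p : ℝ}

lemma cc_nonneg (hp : 0 < p) : 0 ≤ cc p := by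
  unfold cc; positivity

lemma cc_lt_one (hp : 0 < p) (hp1 : p < 1) : cc p < 1 := by
  unfold cc
  rw [div_lt_one (by positivity)]
  nlinarith [sq_nonneg (1-p)]

lemma dd_pos (hp : 0 < p) (hp1 : p < 1) : 0 < dd p := by
  unfold dd; apply div_pos <;> linarith

lemma sqrt_one_sub_cc (hp : 0 < p) (hp1 : p < 1) : Real.sqrt (1 - cc p) = dd p := by
  have h : 1 - cc p = (dd p)^2 := by
    unfold cc dd
    field_simp
    ring
  rw [h, Real.sqrt_sq (dd_pos hp hp1).le]

lemma hasSum_BBfull (hp : 0 < p) (hp1 : p < 1) :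
    HasSum (fun n => gam n * (cc p)^n) (1 / dd p) := by
  have := hasSum_gam (cc_nonneg hp) (cc_lt_one hp hp1)
  rwa [sqrt_one_sub_cc hp hp1] at this

lemma BB_nonneg (hp : 0 < p) (m : ℕ) : 0 ≤ BB p m :=
  Finset.sum_nonneg fun n _ => mul_nonneg (gam_nonneg n) (pow_nonneg (cc_nonneg hp) n)

lemma dd_BB_le (hp : 0 < p) (hp1 : p < 1) (m : ℕ) : dd p * BB p m ≤ 1 := by
  have hle : BB p m ≤ 1 / dd p :=
    sum_le_hasSum (range (m+1)) (fun n _ => mul_nonneg (gam_nonneg n) (pow_nonneg (cc_nonneg hp) n))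
      (hasSum_BBfull hp hp1)
  have hd := dd_pos hp hp1
  calc dd p * BB p m ≤ dd p * (1 / dd p) := by
        apply mul_le_mul_of_nonneg_left hle hd.le
    _ = 1 := by field_simp

lemma bb_le_one (hp : 0 < p) (hp1 : p < 1) (m : ℕ) : bb p m ≤ 1 := by
  rw [bb_eq hp hp1]
  linarith [dd_BB_le hp hp1 m]

lemma bb_nonneg (hp : 0 < p) (hp1 : p < 1) (m : ℕ) : 0 ≤ bb p m := by
  rw [bb_eq hp hp1]
  have := mul_nonneg (dd_pos hp hp1).le (BB_nonneg hp m)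
  linarith

noncomputable def Sval (p y : ℝ) : ℝ :=
  (1 + dd p / Real.sqrt (1 - cc p * y)) / (2*(1-y))

lemma hasSum_Sval (hp : 0 < p) (hp1 : p < 1) {y : ℝ} (hy0 : 0 ≤ y) (hy1 : y < 1) :
    HasSum (fun m => bb p m * y^m) (Sval p y) := by
  have hc0 := cc_nonneg hp
  have hc1 := cc_lt_one hp hp1
  have hcy0 : 0 ≤ cc p * y := mul_nonneg hc0 hy0
  have hcy1 : cc p * y < 1 := by nlinarith
  have h1 := hasSum_gam hcy0 hcy1
  have h1' : HasSum (fun n => (gam n * (cc p)^n) * y^n) (1 / Real.sqrt (1 - cc p * y)) := by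
    have : (fun n => (gam n * (cc p)^n) * y^n) = fun n => gam n * (cc p * y)^n := by
      funext n; rw [mul_pow]; ring
    rw [this]; exact h1
  have h2 : HasSum (fun n : ℕ => y^n) (1-y)⁻¹ := hasSum_geometric_of_lt_one hy0 hy1
  have hnorm1 : Summable (fun n => ‖(gam n * (cc p)^n) * y^n‖) := by
    have : (fun n => ‖(gam n * (cc p)^n) * y^n‖) = fun n => (gam n * (cc p)^n) * y^n := by
      funext n
      rw [Real.norm_eq_abs, abs_of_nonneg]
      exact mul_nonneg (mul_nonneg (gam_nonneg n) (pow_nonneg hc0 n)) (pow_nonneg hy0 n)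
    rw [this]; exact h1'.summable
  have hnorm2 : Summable (fun n : ℕ => ‖y^n‖) := by
    have : (fun n : ℕ => ‖y^n‖) = fun n : ℕ => y^n := by
      funext n; rw [Real.norm_eq_abs, abs_of_nonneg (pow_nonneg hy0 n)]
    rw [this]; exact h2.summable
  have hBB := hasSum_sum_range_mul_of_summable_norm hnorm1 hnorm2
  rw [h1'.tsum_eq, h2.tsum_eq] at hBB
  have hBB' : HasSum (fun n => BB p n * y^n) (1 / Real.sqrt (1 - cc p * y) * (1-y)⁻¹) := by
    have inner : ∀ n : ℕ, ∑ k ∈ range (n+1), ((gam k * (cc p)^k) * y^k) * y^(n-k)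
        = BB p n * y^n := by
      intro n
      unfold BB
      rw [Finset.sum_mul]
      apply Finset.sum_congr rfl
      intro k hk
      rw [Finset.mem_range] at hk
      have : y^k * y^(n-k) = y^n := by rw [← pow_add]; congr 1; omega
      calc ((gam k * (cc p)^k) * y^k) * y^(n-k) = (gam k * (cc p)^k) * (y^k * y^(n-k)) := by ring
        _ = gam k * (cc p)^k * y^n := by rw [this]
    rw [← funext inner]
    exact hBB
  have hcomb := (h2.mul_left ((1:ℝ)/2)).add (hBB'.mul_left (dd p / 2))
  have hfun : (fun n : ℕ => (1:ℝ)/2 * y^n + dd p / 2 * (BB p n * y^n))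
      = fun m => bb p m * y^m := by
    funext m
    rw [bb_eq hp hp1]
    ring
  rw [hfun] at hcomb
  have hval : (1:ℝ)/2 * (1-y)⁻¹ + dd p / 2 * (1 / Real.sqrt (1 - cc p * y) * (1-y)⁻¹)
      = Sval p y := by
    unfold Sval
    have hs : 0 < Real.sqrt (1 - cc p * y) := Real.sqrt_pos.mpr (by nlinarith [mul_nonneg hc0 hy0])
    have hy : (1:ℝ) - y ≠ 0 := by linarith
    field_simp
  rwa [hval] at hcomb

set_option maxHeartbeats 1000000 in
lemma Sval_le (hp : 0 < p) (hp1 : p < 1) {y : ℝ} {N : ℕ} (hN : 1 ≤ N)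
    (hy0 : 0 ≤ y) (hy1 : y < 1) (hyN : y * (N+1) ≤ N) :
    Sval p y ≤ (∑ m ∈ range N, bb p m * y^m) + N * y^(N-1) := by
  have h := hasSum_Sval hp hp1 hy0 hy1
  have hsum := h.summable
  have split := Summable.sum_add_tsum_nat_add (f := fun m => bb p m * y^m) N hsum
  have htail_le : (∑' i : ℕ, bb p (i + N) * y^(i + N)) ≤ ∑' i : ℕ, y^(i+N) := by
    apply Summable.tsum_le_tsum
    · intro i
      calc bb p (i+N) * y^(i+N) ≤ 1 * y^(i+N) :=
            mul_le_mul_of_nonneg_right (bb_le_one hp hp1 _) (pow_nonneg hy0 _)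
        _ = y^(i+N) := one_mul _
    · exact (summable_nat_add_iff N).mpr hsum
    · exact (summable_nat_add_iff N).mpr (summable_geometric_of_lt_one hy0 hy1)
  have hgeo_tail : (∑' i : ℕ, y^(i+N)) = y^N * (1-y)⁻¹ := by
    have : (fun i : ℕ => y^(i+N)) = fun i : ℕ => y^N * y^i := by
      funext i; rw [pow_add]; ring
    rw [this, tsum_mul_left, tsum_geometric_of_lt_one hy0 hy1]
  have hfin : y^N * (1-y)⁻¹ ≤ N * y^(N-1) := by
    have hy' : (0:ℝ) < 1 - y := by linarith
    rw [← div_eq_mul_inv, div_le_iff₀ hy']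
    have hNpow : y^N = y * y^(N-1) := by
      rw [← pow_succ']
      congr 1
      omega
    have hyle : y ≤ N * (1-y) := by
      have : y * (N+1) = y + y * N := by ring
      nlinarith
    calc y^N = y * y^(N-1) := hNpow
      _ ≤ (N * (1-y)) * y^(N-1) := by
          apply mul_le_mul_of_nonneg_right hyle (pow_nonneg hy0 _)
      _ = N * y^(N-1) * (1-y) := by ring
  have : Sval p y = (∑ m ∈ range N, bb p m * y^m) + ∑' i : ℕ, bb p (i + N) * y^(i + N) := by
    rw [split, h.tsum_eq]
  rw [this]
  have := htail_le.trans (le_of_eq hgeo_tail)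
  linarith [this.trans hfin]

lemma qp_pos (hp : 0 < p) (hp1 : p < 1) {x : ℝ} (hx : 0 < x) : 0 < qp p x := by
  unfold qp
  apply div_pos _ (by linarith)
  rw [sub_pos]
  have h : (1-p) = Real.sqrt ((1-p)^2) := by
    rw [Real.sqrt_sq (by linarith)]
  rw [h]
  apply Real.sqrt_lt_sqrt (sq_nonneg _)
  nlinarith

lemma qp_one (hp : 0 < p) (hp1 : p < 1) : qp p 1 = 1 := by
  unfold qp
  have h : (1-p)^2 + 4*p*1 = (1+p)^2 := by ring
  rw [h, Real.sqrt_sq (by linarith)]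
  field_simp
  ring

lemma hasDerivAt_log_qp (hp : 0 < p) (hp1 : p < 1) {y : ℝ} (hy0 : 0 ≤ y) (hy1 : y < 1) :
    HasDerivAt (fun z => Real.log (qp p (1-z))) (-(Sval p y)) y := by
  have hp' : (0:ℝ) < 1 + p := by linarith
  have hDin : (0:ℝ) < (1-p)^2 + 4*p*(1-y) := by nlinarith
  have hinner : HasDerivAt (fun z : ℝ => (1-p)^2 + 4*p*(1-z)) (-(4*p)) y := by
    have h := ((hasDerivAt_id y).const_sub 1).const_mul (4*p)
    have h2 := h.const_add ((1-p)^2)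
    exact h2.congr_deriv (by ring)
  have hsq := hinner.sqrt (ne_of_gt hDin)
  have hq : HasDerivAt (fun z => qp p (1-z))
      (-(4*p) / (2 * Real.sqrt ((1-p)^2 + 4*p*(1-y))) / (2*p)) y := by
    unfold qp
    exact (hsq.sub_const (1-p)).div_const (2*p)
  have hqpos : 0 < qp p (1-y) := qp_pos hp hp1 (by linarith)
  have hlog := hq.log (ne_of_gt hqpos)
  convert hlog using 1
  -- value identity
  set s := Real.sqrt (1 - cc p * y) with hs_def
  have hcy0 : 0 ≤ cc p * y := mul_nonneg (cc_nonneg hp) hy0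
  have hcy1 : cc p * y < 1 := by
    have := cc_lt_one hp hp1
    nlinarith [cc_nonneg hp]
  have hspos : 0 < s := Real.sqrt_pos.mpr (by linarith)
  have hs2 : s^2 = 1 - cc p * y := Real.sq_sqrt (by linarith)
  have hDs : Real.sqrt ((1-p)^2 + 4*p*(1-y)) = (1+p) * s := by
    have h : (1-p)^2 + 4*p*(1-y) = (1+p)^2 * (1 - cc p * y) := by
      unfold cc
      field_simp
      ring
    rw [h, Real.sqrt_mul (sq_nonneg _), Real.sqrt_sq hp'.le]
  have hqval : qp p (1-y) = ((1+p)*s - (1-p)) / (2*p) := by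
    unfold qp
    rw [hDs]
  have hqnum : 0 < (1+p)*s - (1-p) := by
    have h2p : (0:ℝ) < 2*p := by linarith
    have hm := mul_pos hqpos h2p
    rw [hqval, div_mul_cancel₀ _ (ne_of_gt h2p)] at hm
    exact hm
  rw [hqval, hDs]
  unfold Sval
  have hkey : (s + dd p) * ((1+p)*s - (1-p)) * (1+p) = 4*p*(1-y) := by
    unfold cc at hs2
    unfold dd
    field_simp at hs2 ⊢
    linear_combination hs2
  set d := dd p with hd
  set Q := (1+p)*s - (1-p) with hQ
  have hQ0 : Q ≠ 0 := ne_of_gt hqnum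
  have hs0 : s ≠ 0 := ne_of_gt hspos
  have hp0 : p ≠ 0 := ne_of_gt hp
  have h1p : (1:ℝ)+p ≠ 0 := ne_of_gt hp'
  have hy' : (1:ℝ) - y ≠ 0 := by linarith
  field_simp
  rw [← hs_def]
  have e : (1 + d / s) * s = s + d := by field_simp
  linear_combination (-(1+p)*Q) * e - hkey

end Analytic

/-! ### Assembly -/

section Assembly
open Finset

variable {p : ℝ}

lemma aCoeff_nonneg (hp : 0 < p) (i : ℕ) : 0 ≤ aCoeff p i := by
  unfold aCoeff
  apply div_nonneg
  · apply Finset.sum_nonneg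
    intro k _
    positivity
  · positivity

lemma aCoeff_succ (hp : 0 < p) (m : ℕ) :
    aCoeff p (m+1) = bb p m / (m+1) := by
  unfold aCoeff bb
  have h : 2*(m+1) - 1 = 2*m+1 := by omega
  rw [h]
  rw [div_div]
  congr 1
  push_cast
  ring

noncomputable def Ffun (p : ℝ) (N : ℕ) (y : ℝ) : ℝ :=
  (∑ i ∈ Finset.Icc 1 N, aCoeff p i * y ^ i) + y^N + Real.log (qp p (1-y))

lemma sum_Icc_deriv (hp : 0 < p) (N : ℕ) (y : ℝ) :
    ∑ i ∈ Finset.Icc 1 N, aCoeff p i * ((i : ℝ) * y^(i-1)) = ∑ m ∈ range N, bb p m * y^m := by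
  rw [← Finset.Ico_add_one_right_eq_Icc, Finset.sum_Ico_eq_sum_range]
  have h : N + 1 - 1 = N := by omega
  rw [h]
  apply Finset.sum_congr rfl
  intro m _
  have h1 : 1 + m - 1 = m := by omega
  rw [h1]
  rw [show 1 + m = m + 1 from by omega, aCoeff_succ hp m]
  have hm : ((m:ℝ) + 1) ≠ 0 := by positivity
  field_simp
  push_cast
  ring

lemma hasDerivAt_Ffun (hp : 0 < p) (hp1 : p < 1) {N : ℕ} (hN : 1 ≤ N)
    {y : ℝ} (hy0 : 0 ≤ y) (hy1 : y < 1) :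
    HasDerivAt (Ffun p N)
      ((∑ m ∈ range N, bb p m * y^m) + N * y^(N-1) - Sval p y) y := by
  have h1 : HasDerivAt (fun y => ∑ i ∈ Finset.Icc 1 N, aCoeff p i * y ^ i)
      (∑ i ∈ Finset.Icc 1 N, aCoeff p i * ((i:ℝ) * y^(i-1))) y := by
    apply HasDerivAt.fun_sum
    intro i _
    exact (hasDerivAt_pow i y).const_mul (aCoeff p i)
  have h2 : HasDerivAt (fun y : ℝ => y^N) ((N:ℝ) * y^(N-1)) y := hasDerivAt_pow N y
  have h3 := hasDerivAt_log_qp hp hp1 hy0 hy1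
  have := (h1.add h2).add h3
  rw [sum_Icc_deriv hp N y] at this
  rw [sub_eq_add_neg]
  exact this

lemma Ffun_zero (hp : 0 < p) (hp1 : p < 1) {N : ℕ} (hN : 1 ≤ N) : Ffun p N 0 = 0 := by
  unfold Ffun
  have h1 : ∑ i ∈ Finset.Icc 1 N, aCoeff p i * (0:ℝ) ^ i = 0 := by
    apply Finset.sum_eq_zero
    intro i hi
    rw [Finset.mem_Icc] at hi
    rw [zero_pow (by omega), mul_zero]
  rw [h1, zero_pow (by omega), sub_zero, qp_one hp hp1, Real.log_one]
  ring

lemma Ffun_nonneg (hp : 0 < p) (hp1 : p < 1) {N : ℕ} (hN : 1 ≤ N)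
    {y : ℝ} (hy0 : 0 ≤ y) (hy1 : y ≤ 1 - 1/(N:ℝ)) : 0 ≤ Ffun p N y := by
  have hNR : (1:ℝ) ≤ (N:ℝ) := by exact_mod_cast hN
  have hNpos : (0:ℝ) < N := by linarith
  set y₀ : ℝ := 1 - 1/(N:ℝ) with hy₀
  have hy₀0 : 0 ≤ y₀ := by
    have : 1/(N:ℝ) ≤ 1 := by
      rw [div_le_one hNpos]; exact hNR
    simp only [hy₀]; linarith
  have hy₀1 : y₀ < 1 := by
    have : 0 < 1/(N:ℝ) := by positivity
    simp only [hy₀]; linarith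
  have hmono : MonotoneOn (Ffun p N) (Set.Icc 0 y₀) := by
    apply monotoneOn_of_deriv_nonneg (convex_Icc 0 y₀)
    · intro z hz
      rw [Set.mem_Icc] at hz
      exact (hasDerivAt_Ffun hp hp1 hN hz.1 (lt_of_le_of_lt hz.2 hy₀1)).continuousAt.continuousWithinAt
    · intro z hz
      rw [interior_Icc, Set.mem_Ioo] at hz
      exact (hasDerivAt_Ffun hp hp1 hN hz.1.le (lt_trans hz.2 hy₀1)).differentiableAt.differentiableWithinAt
    · intro z hz
      rw [interior_Icc, Set.mem_Ioo] at hz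
      have hz1 : z < 1 := lt_trans hz.2 hy₀1
      rw [(hasDerivAt_Ffun hp hp1 hN hz.1.le hz1).deriv]
      rw [sub_nonneg]
      apply Sval_le hp hp1 hN hz.1.le hz1
      -- z * (N+1) ≤ N from z < 1 - 1/N
      have hzlt : z < 1 - 1/(N:ℝ) := hz.2
      have : z * (N:ℝ) < (N:ℝ) - 1 := by
        have := mul_lt_mul_of_pos_right hzlt hNpos
        calc z * (N:ℝ) < (1 - 1/(N:ℝ)) * N := by linarith [this]
          _ = (N:ℝ) - 1 := by field_simp
      nlinarith [hz.1, hz1]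
  have h := hmono (Set.mem_Icc.mpr ⟨le_refl 0, hy₀0⟩) (Set.mem_Icc.mpr ⟨hy0, hy1⟩) hy0
  rwa [Ffun_zero hp hp1 hN] at h

theorem stmt8 (p : ℝ) (hp0 : 0 < p) (hp1 : p < 1) (μ : ℝ) (hμ : 0 < μ)
    (N : ℕ) (hN : 1 ≤ N) :
    ∀ x ∈ Set.Icc (1 / (N : ℝ)) 1,
      lamBarN p μ N x ≤ Real.exp (-μ) * qp p x ∧
      Real.exp (-μ) * qp p x < qp p x := by
  intro x hx
  rw [Set.mem_Icc] at hx
  have hNR : (1:ℝ) ≤ (N:ℝ) := by exact_mod_cast hN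
  have hNpos : (0:ℝ) < N := by linarith
  have hxpos : 0 < x := lt_of_lt_of_le (by positivity) hx.1
  have hq := qp_pos hp0 hp1 hxpos
  constructor
  · -- main inequality
    set y := 1 - x with hy_def
    have hy0 : 0 ≤ y := by simp only [hy_def]; linarith [hx.2]
    have hy1 : y ≤ 1 - 1/(N:ℝ) := by simp only [hy_def]; linarith [hx.1]
    have hF := Ffun_nonneg hp0 hp1 hN hy0 hy1
    unfold Ffun at hF
    have hxy : 1 - y = x := by simp [hy_def]
    rw [hxy] at hF
    -- lamBarN = exp (-(μ + T))
    have hG : 0 ≤ Gpart p N := Finset.sum_nonneg fun i _ => aCoeff_nonneg hp0 i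
    have hdenom : μ + Gpart p N + 1 ≠ 0 := by positivity
    have hlam : lamBarN p μ N x =
        Real.exp (-(μ + ((∑ i ∈ Finset.Icc 1 N, aCoeff p i * y ^ i) + y^N))) := by
      unfold lamBarN rhoN
      congr 1
      rw [← hy_def]
      field_simp
      ring
    rw [hlam]
    have hlog : -(μ + ((∑ i ∈ Finset.Icc 1 N, aCoeff p i * y ^ i) + y^N))
        ≤ -μ + Real.log (qp p x) := by
      linarith [hF]
    calc Real.exp (-(μ + ((∑ i ∈ Finset.Icc 1 N, aCoeff p i * y ^ i) + y^N)))
        ≤ Real.exp (-μ + Real.log (qp p x)) := Real.exp_le_exp.mpr hlog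
      _ = Real.exp (-μ) * qp p x := by
          rw [Real.exp_add, Real.exp_log hq]
  · -- strict inequality
    have h1 : Real.exp (-μ) < 1 := by
      rw [Real.exp_lt_one_iff]
      linarith
    nlinarith [hq, h1]

end Assembly
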